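/- arXiv:1510.04441 — 6 statements merged into one kernel-verified Lean document; each statement's English description precedes it below -/
import Mathlib

section
/- Let (Ω, 𝔉) be a measurable space, θ : ℝ → Ω → Ω a family of maps, A a real d×d matrix and λ < 0 with |exp(tA)_{ij}| ≤ e^{λt} for all t ≥ 0 and all i,j. Let N ∈ ℝ^d with 0 ≤ N, let L ≥ 0, and let h : ℝ^d → ℝ^d be continuously differentiable with |∂h_i/∂x_j(x)| ≤ L for all x and all i,j. Let c : Ω → ℝ^d be any function. For f : Ω → ℝ^d with 0 ≤ f(ω) ≤ N componentwise for all ω and such that s ↦ f(θ_s ω) is measurable for each ω, define (𝒦f)(ω) = ∫_{−∞}^0 exp(−sA)·f(θ_s ω) ds + c(ω). Then for any two such functions f₁, f₂, sup_{ω∈Ω} ‖h((𝒦f₁)(ω)) − h((𝒦f₂)(ω))‖_∞ ≤ (−Ld²/λ) · sup_{ω∈Ω} ‖f₁(ω) − f₂(ω)‖_∞. -/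
open MeasureTheory


-- scalar exponential integral on Iic 0
lemma aux_exp_integrableOn {l : ℝ} (hl : l < 0) :
    IntegrableOn (fun s : ℝ => Real.exp (-l * s)) (Set.Iic (0:ℝ)) := by
  have hIoi : IntegrableOn (fun x : ℝ => Real.exp (l * x)) (Set.Ioi (0:ℝ)) := by
    have := exp_neg_integrableOn_Ioi 0 (b := -l) (by linarith)
    simpa using this
  have hIci : IntegrableOn (fun x : ℝ => Real.exp (l * x)) (Set.Ici (0:ℝ)) :=
    (integrableOn_Ici_iff_integrableOn_Ioi (by simp)).2 hIoi
  have A : MeasurableEmbedding (fun x : ℝ => -x) :=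
    (Homeomorph.neg ℝ).isClosedEmbedding.measurableEmbedding
  have hmap : (volume : Measure ℝ).restrict (Set.Iic (0:ℝ))
      = Measure.map (fun x : ℝ => -x) ((volume : Measure ℝ).restrict (Set.Ici 0)) := by
    conv_lhs => rw [← Measure.map_neg_eq_self (volume : Measure ℝ)]
    rw [Measure.restrict_map measurable_neg measurableSet_Iic]
    congr 1
    ext x
    simp
  rw [IntegrableOn, hmap, A.integrable_map_iff]
  refine hIci.congr_fun ?_ measurableSet_Ici
  intro x _
  simp [Function.comp, mul_comm]

lemma aux_exp_integral {l : ℝ} (hl : l < 0) :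
    ∫ s in Set.Iic (0:ℝ), Real.exp (-l * s) = -1 / l := by
  have h1 := integral_comp_neg_Iic (0:ℝ) (fun y => Real.exp (l * y))
  have h2 := integral_comp_mul_left_Ioi (fun y => Real.exp (-y)) 0 (b := -l) (by linarith)
  simp only [neg_zero, mul_zero] at h1 h2
  rw [integral_exp_neg_Ioi_zero, smul_eq_mul, mul_one] at h2
  have e1 : (fun s : ℝ => Real.exp (-l * s)) = fun s : ℝ => Real.exp (l * (-s)) := by
    funext s; ring_nf
  have e2 : (fun x : ℝ => Real.exp (-(-l * x))) = fun x : ℝ => Real.exp (l * x) := by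
    funext x; ring_nf
  rw [e1, h1, ← e2, h2]
  rw [inv_neg, neg_div, inv_eq_one_div]

lemma aux_lipschitz {d : ℕ} {L : ℝ} (hL : 0 ≤ L)
    (h : (Fin d → ℝ) → (Fin d → ℝ)) (hC1 : ContDiff ℝ 1 h)
    (hD : ∀ x : Fin d → ℝ, ∀ i j : Fin d, |fderiv ℝ h x (Pi.single j 1) i| ≤ L)
    (x y : Fin d → ℝ) : ‖h x - h y‖ ≤ L * d * ‖x - y‖ := by
  have hdiff : Differentiable ℝ h := hC1.differentiable one_ne_zero
  have hb : ∀ z : Fin d → ℝ, ‖fderiv ℝ h z‖ ≤ L * d := by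
    intro z
    refine ContinuousLinearMap.opNorm_le_bound _ (by positivity) fun v => ?_
    have hv : (fderiv ℝ h z) v = ∑ j, v j • (fderiv ℝ h z) (Pi.single j 1) := by
      conv_lhs => rw [← Finset.univ_sum_single v]
      rw [map_sum]
      refine Finset.sum_congr rfl fun j _ => ?_
      rw [← (fderiv ℝ h z).map_smul]
      congr 1
      rw [← Pi.single_smul, smul_eq_mul, mul_one]
    rw [pi_norm_le_iff_of_nonneg (by positivity)]
    intro i
    rw [hv]
    simp only [Finset.sum_apply, Pi.smul_apply, smul_eq_mul, Real.norm_eq_abs]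
    calc |∑ j, v j * (fderiv ℝ h z) (Pi.single j 1) i|
        ≤ ∑ j, |v j * (fderiv ℝ h z) (Pi.single j 1) i| := Finset.abs_sum_le_sum_abs _ _
      _ ≤ ∑ _j : Fin d, ‖v‖ * L := by
          refine Finset.sum_le_sum fun j _ => ?_
          rw [abs_mul]
          exact mul_le_mul (by simpa using norm_le_pi_norm v j) (hD z i j)
            (abs_nonneg _) (norm_nonneg _)
      _ = L * d * ‖v‖ := by
          rw [Finset.sum_const, Finset.card_univ, Fintype.card_fin, nsmul_eq_mul]
          ring
  exact Convex.norm_image_sub_le_of_norm_fderiv_le (fun z _ => hdiff z) (fun z _ => hb z)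
    convex_univ (Set.mem_univ y) (Set.mem_univ x)

lemma aux_mulVec_bound {d : ℕ} (B : Matrix (Fin d) (Fin d) ℝ) (v : Fin d → ℝ)
    {C M : ℝ} (hC : 0 ≤ C) (hM : 0 ≤ M)
    (hB : ∀ i j, |B i j| ≤ C) (hv : ∀ j, |v j| ≤ M) :
    ‖B.mulVec v‖ ≤ d * (C * M) := by
  rw [pi_norm_le_iff_of_nonneg (by positivity)]
  intro i
  rw [Real.norm_eq_abs]
  calc |B.mulVec v i| = |∑ j, B i j * v j| := rfl
    _ ≤ ∑ j, |B i j * v j| := Finset.abs_sum_le_sum_abs _ _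
    _ ≤ ∑ _j : Fin d, C * M := Finset.sum_le_sum fun j _ => by
        rw [abs_mul]; exact mul_le_mul (hB i j) (hv j) (abs_nonneg _) hC
    _ = d * (C * M) := by
        rw [Finset.sum_const, Finset.card_univ, Fintype.card_fin, nsmul_eq_mul]

/-- Contraction estimate of the paper's Lemma 4.1: for the input-to-state characteristic
operator `(𝒦f)(ω) = ∫_{-∞}^0 exp(−sA)·f(θ_s ω) ds + c(ω)`, the gain operator `h ∘ 𝒦`
is Lipschitz with constant `−Ld²/λ` in the uniform sup-norm metric. -/
theorem gain_operator_contraction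
    {Ω : Type*} [MeasurableSpace Ω] (θ : ℝ → Ω → Ω)
    {d : ℕ} (hd : 1 ≤ d)
    (A : Matrix (Fin d) (Fin d) ℝ) (l : ℝ) (hl : l < 0)
    (hA : ∀ t : ℝ, 0 ≤ t → ∀ i j : Fin d,
      |NormedSpace.exp (t • A) i j| ≤ Real.exp (l * t))
    (N : Fin d → ℝ) (hN : 0 ≤ N) (L : ℝ) (hL : 0 ≤ L)
    (h : (Fin d → ℝ) → (Fin d → ℝ)) (hC1 : ContDiff ℝ 1 h)
    (hD : ∀ x : Fin d → ℝ, ∀ i j : Fin d, |fderiv ℝ h x (Pi.single j 1) i| ≤ L)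
    (c : Ω → (Fin d → ℝ))
    (f₁ f₂ : Ω → (Fin d → ℝ))
    (hrange₁ : ∀ ω : Ω, 0 ≤ f₁ ω ∧ f₁ ω ≤ N)
    (hrange₂ : ∀ ω : Ω, 0 ≤ f₂ ω ∧ f₂ ω ≤ N)
    (hmeas₁ : ∀ ω : Ω, Measurable fun s : ℝ => f₁ (θ s ω))
    (hmeas₂ : ∀ ω : Ω, Measurable fun s : ℝ => f₂ (θ s ω)) :
    ∀ ω : Ω,
      ‖h ((∫ s in Set.Iic (0 : ℝ),
            (NormedSpace.exp ((-s) • A)).mulVec (f₁ (θ s ω))) + c ω) -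
        h ((∫ s in Set.Iic (0 : ℝ),
            (NormedSpace.exp ((-s) • A)).mulVec (f₂ (θ s ω))) + c ω)‖
        ≤ (-(L * (d : ℝ) ^ 2) / l) * ⨆ ω' : Ω, ‖f₁ ω' - f₂ ω'‖ := by
  intro ω
  -- notation
  set E : ℝ → Matrix (Fin d) (Fin d) ℝ := fun s => NormedSpace.exp ((-s) • A) with hE
  -- the sup is well-defined
  have hNnorm : ∀ (f : Ω → (Fin d → ℝ)), (∀ ω' : Ω, 0 ≤ f ω' ∧ f ω' ≤ N) →
      ∀ ω' j, |f ω' j| ≤ ‖N‖ := by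
    intro f hf ω' j
    have h0 := (hf ω').1 j
    have h1 := (hf ω').2 j
    calc |f ω' j| = f ω' j := abs_of_nonneg h0
      _ ≤ N j := h1
      _ ≤ |N j| := le_abs_self _
      _ ≤ ‖N‖ := by simpa using norm_le_pi_norm N j
  have hbddrange : ∀ ω' : Ω, ‖f₁ ω' - f₂ ω'‖ ≤ 2 * ‖N‖ := by
    intro ω'
    have : (0:ℝ) ≤ 2 * ‖N‖ := by positivity
    rw [pi_norm_le_iff_of_nonneg this]
    intro j
    rw [Real.norm_eq_abs, Pi.sub_apply]
    calc |f₁ ω' j - f₂ ω' j| ≤ |f₁ ω' j| + |f₂ ω' j| := abs_sub _ _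
      _ ≤ ‖N‖ + ‖N‖ := add_le_add (hNnorm f₁ hrange₁ ω' j) (hNnorm f₂ hrange₂ ω' j)
      _ = 2 * ‖N‖ := by ring
  have hbdd : BddAbove (Set.range fun ω' : Ω => ‖f₁ ω' - f₂ ω'‖) := by
    refine ⟨2 * ‖N‖, ?_⟩
    rintro r ⟨ω', rfl⟩
    exact hbddrange ω'
  set M : ℝ := ⨆ ω' : Ω, ‖f₁ ω' - f₂ ω'‖ with hM
  have hMle : ∀ ω' : Ω, ‖f₁ ω' - f₂ ω'‖ ≤ M := fun ω' => le_ciSup hbdd ω'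
  have hM0 : 0 ≤ M := le_trans (norm_nonneg _) (hMle ω)
  -- entrywise bound on the matrix exponential
  have hEb : ∀ s : ℝ, s ≤ 0 → ∀ i j : Fin d, |E s i j| ≤ Real.exp (-l * s) := by
    intro s hs i j
    have := hA (-s) (by linarith) i j
    rwa [mul_neg, ← neg_mul] at this
  -- continuity of entries of the matrix exponential
  have hcont : ∀ i j : Fin d, Continuous fun s : ℝ => E s i j := by
    intro i j
    letI : NormedRing (Matrix (Fin d) (Fin d) ℝ) := Matrix.linftyOpNormedRing
    letI : NormedAlgebra ℝ (Matrix (Fin d) (Fin d) ℝ) := Matrix.linftyOpNormedAlgebra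
    letI : NormedAlgebra ℚ (Matrix (Fin d) (Fin d) ℝ) := .restrictScalars ℚ ℝ _
    have h1 : Continuous fun s : ℝ => NormedSpace.exp ((-s) • A) :=
      NormedSpace.exp_continuous.comp (continuous_neg.smul continuous_const)
    exact (continuous_apply j).comp ((continuous_apply i).comp h1)
  -- measurability of the integrands
  have hgm : ∀ (f : Ω → (Fin d → ℝ)), (∀ ω', Measurable fun s : ℝ => f (θ s ω')) →
      Measurable fun s : ℝ => (E s).mulVec (f (θ s ω)) := by
    intro f hf
    rw [measurable_pi_iff]
    intro i
    have : (fun s : ℝ => (E s).mulVec (f (θ s ω)) i)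
        = fun s : ℝ => ∑ j, E s i j * f (θ s ω) j := rfl
    rw [this]
    exact Finset.measurable_sum _ fun j _ =>
      ((hcont i j).measurable).mul ((measurable_pi_apply j).comp (hf ω))
  -- exponential integrability
  have hIexp : IntegrableOn (fun s : ℝ => Real.exp (-l * s)) (Set.Iic (0:ℝ)) :=
    aux_exp_integrableOn hl
  -- integrability of the two integrands
  have hgi : ∀ (f : Ω → (Fin d → ℝ)), (∀ ω' : Ω, 0 ≤ f ω' ∧ f ω' ≤ N) →
      (∀ ω', Measurable fun s : ℝ => f (θ s ω')) →
      IntegrableOn (fun s : ℝ => (E s).mulVec (f (θ s ω))) (Set.Iic (0:ℝ)) := by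
    intro f hfr hfm
    refine Integrable.mono' ((hIexp.mul_const ‖N‖).const_mul (d:ℝ))
      ((hgm f hfm).aestronglyMeasurable) ?_
    refine (ae_restrict_iff' measurableSet_Iic).2 (ae_of_all _ fun s hs => ?_)
    have := aux_mulVec_bound (E s) (f (θ s ω)) (Real.exp_nonneg _) (norm_nonneg N)
      (hEb s hs) (fun j => hNnorm f hfr (θ s ω) j)
    calc ‖(E s).mulVec (f (θ s ω))‖ ≤ (d:ℝ) * (Real.exp (-l * s) * ‖N‖) := this
      _ = (d:ℝ) * (Real.exp (-l * s) * ‖N‖) := rfl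
  have hgi₁ := hgi f₁ hrange₁ hmeas₁
  have hgi₂ := hgi f₂ hrange₂ hmeas₂
  -- difference of integrals
  have hsub : (∫ s in Set.Iic (0:ℝ), (E s).mulVec (f₁ (θ s ω)))
      - (∫ s in Set.Iic (0:ℝ), (E s).mulVec (f₂ (θ s ω)))
      = ∫ s in Set.Iic (0:ℝ),
          ((E s).mulVec (f₁ (θ s ω)) - (E s).mulVec (f₂ (θ s ω))) :=
    (integral_sub hgi₁ hgi₂).symm
  -- norm bound on the difference of integrals
  have hnorm : ‖(∫ s in Set.Iic (0:ℝ), (E s).mulVec (f₁ (θ s ω)))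
      - (∫ s in Set.Iic (0:ℝ), (E s).mulVec (f₂ (θ s ω)))‖
      ≤ (d:ℝ) * M * (-1 / l) := by
    rw [hsub]
    have hb : ∀ᵐ s ∂(volume.restrict (Set.Iic (0:ℝ))),
        ‖(E s).mulVec (f₁ (θ s ω)) - (E s).mulVec (f₂ (θ s ω))‖
          ≤ (d:ℝ) * M * Real.exp (-l * s) := by
      refine (ae_restrict_iff' measurableSet_Iic).2 (ae_of_all _ fun s hs => ?_)
      rw [← Matrix.mulVec_sub]
      have hv : ∀ j, |(f₁ (θ s ω) - f₂ (θ s ω)) j| ≤ M := by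
        intro j
        calc |(f₁ (θ s ω) - f₂ (θ s ω)) j| ≤ ‖f₁ (θ s ω) - f₂ (θ s ω)‖ := by
              simpa using norm_le_pi_norm (f₁ (θ s ω) - f₂ (θ s ω)) j
          _ ≤ M := hMle (θ s ω)
      calc ‖(E s).mulVec (f₁ (θ s ω) - f₂ (θ s ω))‖
          ≤ (d:ℝ) * (Real.exp (-l * s) * M) :=
            aux_mulVec_bound _ _ (Real.exp_nonneg _) hM0 (hEb s hs) hv
        _ = (d:ℝ) * M * Real.exp (-l * s) := by ring
    have hint : Integrable (fun s : ℝ => (d:ℝ) * M * Real.exp (-l * s))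
        (volume.restrict (Set.Iic (0:ℝ))) := hIexp.const_mul _
    calc ‖∫ s in Set.Iic (0:ℝ),
          ((E s).mulVec (f₁ (θ s ω)) - (E s).mulVec (f₂ (θ s ω)))‖
        ≤ ∫ s in Set.Iic (0:ℝ), (d:ℝ) * M * Real.exp (-l * s) :=
          norm_integral_le_of_norm_le hint hb
      _ = (d:ℝ) * M * ∫ s in Set.Iic (0:ℝ), Real.exp (-l * s) := integral_const_mul _ _
      _ = (d:ℝ) * M * (-1 / l) := by rw [aux_exp_integral hl]
  -- assemble
  have hlip := aux_lipschitz hL h hC1 hD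
    ((∫ s in Set.Iic (0:ℝ), (E s).mulVec (f₁ (θ s ω))) + c ω)
    ((∫ s in Set.Iic (0:ℝ), (E s).mulVec (f₂ (θ s ω))) + c ω)
  rw [add_sub_add_comm, sub_self, add_zero] at hlip
  refine hlip.trans ?_
  calc L * (d:ℝ) * ‖(∫ s in Set.Iic (0:ℝ), (E s).mulVec (f₁ (θ s ω)))
        - (∫ s in Set.Iic (0:ℝ), (E s).mulVec (f₂ (θ s ω)))‖
      ≤ L * (d:ℝ) * ((d:ℝ) * M * (-1 / l)) := by
        refine mul_le_mul_of_nonneg_left hnorm (by positivity)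
    _ = (-(L * (d : ℝ) ^ 2) / l) * M := by field_simp
end

section
/- Let (Ω, 𝔉) be a measurable space and θ : ℝ → Ω → Ω with (s,ω) ↦ θ_s ω jointly measurable. Let A be a real d×d matrix and λ < 0 with |exp(tA)_{ij}| ≤ e^{λt} for all t ≥ 0 and all i,j. Let N ∈ ℝ^d with 0 ≤ N, L ≥ 0 with Ld² < −λ, and let h : ℝ^d → ℝ^d be continuously differentiable with |∂h_i/∂x_j(x)| ≤ L for all x, i, j and with 0 ≤ h(x) ≤ N componentwise for all x. Let c : Ω → ℝ^d be measurable. Then there exists a unique measurable u : Ω → ℝ^d with 0 ≤ u(ω) ≤ N for all ω satisfying u(ω) = h( ∫_{−∞}^0 exp(−sA)·u(θ_s ω) ds + c(ω) ) for every ω ∈ Ω. -/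
open MeasureTheory
open scoped BoundedContinuousFunction
set_option maxHeartbeats 1000000
set_option synthInstance.maxHeartbeats 400000

namespace SmallGainAux

lemma single_eq_smul {d : ℕ} (j : Fin d) (r : ℝ) :
    Pi.single j r = r • (Pi.single j (1 : ℝ) : Fin d → ℝ) := by
  funext k
  by_cases hk : k = j <;> simp [Pi.single_apply, hk]

lemma kernel_bound {d : ℕ} (A : Matrix (Fin d) (Fin d) ℝ) (l : ℝ)
    (hA : ∀ t : ℝ, 0 ≤ t → ∀ i j : Fin d,
      |NormedSpace.exp (t • A) i j| ≤ Real.exp (l * t))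
    {s : ℝ} (hs : s ≤ 0) (v : Fin d → ℝ) :
    ‖(NormedSpace.exp ((-s) • A)).mulVec v‖ ≤ (d : ℝ) * Real.exp (l * (-s)) * ‖v‖ := by
  have hpos : (0:ℝ) ≤ (d : ℝ) * Real.exp (l * (-s)) * ‖v‖ := by positivity
  rw [pi_norm_le_iff_of_nonneg hpos]
  intro i
  rw [Real.norm_eq_abs]
  calc |(NormedSpace.exp ((-s) • A)).mulVec v i|
      = |∑ j, NormedSpace.exp ((-s) • A) i j * v j| := by
        simp [Matrix.mulVec, dotProduct]
    _ ≤ ∑ j, |NormedSpace.exp ((-s) • A) i j * v j| := Finset.abs_sum_le_sum_abs _ _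
    _ ≤ ∑ _j : Fin d, Real.exp (l * (-s)) * ‖v‖ := by
        refine Finset.sum_le_sum fun j _ => ?_
        rw [abs_mul]
        exact mul_le_mul (hA (-s) (by linarith) i j)
          (by simpa [Real.norm_eq_abs] using norm_le_pi_norm v j)
          (abs_nonneg _) (Real.exp_pos _).le
    _ = (d : ℝ) * Real.exp (l * (-s)) * ‖v‖ := by
        simp [Finset.sum_const, Finset.card_univ, mul_assoc]

lemma lip_h {d : ℕ} {L : ℝ} (hL : 0 ≤ L) (h : (Fin d → ℝ) → (Fin d → ℝ))
    (hC1 : ContDiff ℝ 1 h)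
    (hD : ∀ x : Fin d → ℝ, ∀ i j : Fin d, |fderiv ℝ h x (Pi.single j 1) i| ≤ L)
    (x y : Fin d → ℝ) :
    ‖h x - h y‖ ≤ L * d * ‖x - y‖ := by
  have hdiff : ∀ z ∈ (Set.univ : Set (Fin d → ℝ)), DifferentiableAt ℝ h z :=
    fun z _ => (hC1.differentiable one_ne_zero).differentiableAt
  have hbound : ∀ z ∈ (Set.univ : Set (Fin d → ℝ)), ‖fderiv ℝ h z‖ ≤ L * d := by
    intro z _
    refine ContinuousLinearMap.opNorm_le_bound _ (by positivity) fun w => ?_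
    have hw : w = ∑ j, w j • (Pi.single j (1:ℝ) : Fin d → ℝ) := by
      conv_lhs => rw [← Finset.univ_sum_single w]
      exact Finset.sum_congr rfl fun j _ => single_eq_smul j (w j)
    calc ‖fderiv ℝ h z w‖
        = ‖∑ j, w j • fderiv ℝ h z (Pi.single j (1:ℝ))‖ := by
          conv_lhs => rw [hw]
          rw [map_sum]
          simp only [ContinuousLinearMap.map_smul]
      _ ≤ ∑ j, ‖w j • fderiv ℝ h z (Pi.single j (1:ℝ))‖ := norm_sum_le _ _
      _ ≤ ∑ _j : Fin d, ‖w‖ * L := by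
          refine Finset.sum_le_sum fun j _ => ?_
          rw [norm_smul]
          refine mul_le_mul (norm_le_pi_norm w j) ?_ (norm_nonneg _) (norm_nonneg _)
          rw [pi_norm_le_iff_of_nonneg hL]
          intro i
          rw [Real.norm_eq_abs]
          exact hD z i j
      _ = L * d * ‖w‖ := by
          simp [Finset.sum_const, Finset.card_univ]
          ring
  have := Convex.norm_image_sub_le_of_norm_fderiv_le hdiff hbound convex_univ
    (Set.mem_univ y) (Set.mem_univ x)
  simpa using this

lemma integrableOn_exp_mul_Iic {b : ℝ} (hb : 0 < b) :
    IntegrableOn (fun s : ℝ => Real.exp (b * s)) (Set.Iic 0) := by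
  have m : MeasurableEmbedding fun x : ℝ => -x :=
    (Homeomorph.neg ℝ).measurableEmbedding
  rw [IntegrableOn, ← Measure.map_neg_eq_self (volume : Measure ℝ)]
  rw [MeasureTheory.Measure.restrict_map m.measurable measurableSet_Iic]
  rw [m.integrable_map_iff]
  have : ((fun x : ℝ => -x) ⁻¹' Set.Iic 0) = Set.Ici 0 := by
    ext x; simp
  rw [this]
  have : ((fun s : ℝ => Real.exp (b * s)) ∘ fun x : ℝ => -x)
      = fun x : ℝ => Real.exp (-b * x) := by
    funext x; simp only [Function.comp]; ring_nf
  rw [this]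
  exact Iff.mpr integrableOn_Ici_iff_integrableOn_Ioi (exp_neg_integrableOn_Ioi 0 hb)

lemma integral_exp_mul_Iic {b : ℝ} (hb : 0 < b) :
    ∫ s in Set.Iic (0:ℝ), Real.exp (b * s) = b⁻¹ := by
  have h1 : (∫ s in Set.Iic (0:ℝ), Real.exp (b * s))
      = ∫ x in Set.Ioi (-(0:ℝ)), Real.exp (-(b * x)) := by
    rw [← integral_comp_neg_Iic]
    congr 1
    funext x
    ring_nf
  rw [h1, neg_zero]
  have h2 : (∫ x in Set.Ioi (0:ℝ), Real.exp (-(b * x)))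
      = b⁻¹ • ∫ x in Set.Ioi (b * 0), Real.exp (-x) := by
    exact integral_comp_mul_left_Ioi (fun x => Real.exp (-x)) 0 hb
  rw [h2, mul_zero, integral_exp_neg_Ioi, neg_zero, Real.exp_zero, smul_eq_mul, mul_one]

end SmallGainAux


open SmallGainAux in
/-- Fixed-point assertion of the paper's small-gain Theorem 4.1. -/
theorem small_gain_unique_fixed_point
    {Ω : Type*} [MeasurableSpace Ω] (θ : ℝ → Ω → Ω)
    (hθ : Measurable fun p : ℝ × Ω => θ p.1 p.2)
    {d : ℕ} (hd : 1 ≤ d)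
    (A : Matrix (Fin d) (Fin d) ℝ) (l : ℝ) (hl : l < 0)
    (hA : ∀ t : ℝ, 0 ≤ t → ∀ i j : Fin d,
      |NormedSpace.exp (t • A) i j| ≤ Real.exp (l * t))
    (N : Fin d → ℝ) (hN : 0 ≤ N) (L : ℝ) (hL : 0 ≤ L)
    (hsmall : L * (d : ℝ) ^ 2 < -l)
    (h : (Fin d → ℝ) → (Fin d → ℝ)) (hC1 : ContDiff ℝ 1 h)
    (hD : ∀ x : Fin d → ℝ, ∀ i j : Fin d, |fderiv ℝ h x (Pi.single j 1) i| ≤ L)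
    (hrange : ∀ x : Fin d → ℝ, 0 ≤ h x ∧ h x ≤ N)
    (c : Ω → (Fin d → ℝ)) (hc : Measurable c) :
    ∃! u : Ω → (Fin d → ℝ),
      Measurable u ∧ (∀ ω : Ω, 0 ≤ u ω ∧ u ω ≤ N) ∧
      ∀ ω : Ω, u ω = h ((∫ s in Set.Iic (0 : ℝ),
        (NormedSpace.exp ((-s) • A)).mulVec (u (θ s ω))) + c ω) := by
  letI : TopologicalSpace Ω := ⊥
  haveI : DiscreteTopology Ω := ⟨rfl⟩
  set b : ℝ := -l with hbdef
  have hb : 0 < b := by simp [hbdef]; linarith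
  set M : ℝ := ‖N‖ with hMdef
  -- norm bound from the componentwise bounds
  have hnormN : ∀ x : Fin d → ℝ, 0 ≤ x → x ≤ N → ‖x‖ ≤ M := by
    intro x h0 hxN
    rw [pi_norm_le_iff_of_nonneg (norm_nonneg N)]
    intro i
    rw [Real.norm_eq_abs, abs_le]
    have h00 : (0:ℝ) ≤ x i := by simpa using h0 i
    refine ⟨by linarith [norm_nonneg N], ?_⟩
    have h1 : x i ≤ N i := hxN i
    have h2 : N i ≤ |N i| := le_abs_self _
    have h3 : |N i| ≤ ‖N‖ := by
      simpa [Real.norm_eq_abs] using norm_le_pi_norm N i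
    linarith
  have hhM : ∀ x : Fin d → ℝ, ‖h x‖ ≤ M :=
    fun x => hnormN _ (hrange x).1 (hrange x).2
  -- measurability of the matrix kernel entries
  have hker : ∀ i j : Fin d, Measurable fun s : ℝ => NormedSpace.exp ((-s) • A) i j := by
    have hexpcont : Continuous fun s : ℝ => NormedSpace.exp ((-s) • A) := by
      letI : SeminormedRing (Matrix (Fin d) (Fin d) ℝ) := Matrix.linftyOpSemiNormedRing
      letI : NormedRing (Matrix (Fin d) (Fin d) ℝ) := Matrix.linftyOpNormedRing
      letI : NormedAlgebra ℝ (Matrix (Fin d) (Fin d) ℝ) := Matrix.linftyOpNormedAlgebra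
      letI : NormedAlgebra ℚ (Matrix (Fin d) (Fin d) ℝ) := Matrix.linftyOpNormedAlgebra
      exact NormedSpace.exp_continuous.comp (continuous_id.neg.smul continuous_const)
    exact fun i j => (hexpcont.matrix_elem i j).measurable
  -- joint measurability of the integrand
  have hintegrand : ∀ u : Ω → (Fin d → ℝ), Measurable u →
      Measurable fun p : Ω × ℝ =>
        (NormedSpace.exp ((-p.2) • A)).mulVec (u (θ p.2 p.1)) := by
    intro u hu
    refine measurable_pi_iff.2 fun i => ?_
    have heq : (fun p : Ω × ℝ =>
        (NormedSpace.exp ((-p.2) • A)).mulVec (u (θ p.2 p.1)) i)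
        = fun p : Ω × ℝ => ∑ j, NormedSpace.exp ((-p.2) • A) i j * u (θ p.2 p.1) j := by
      funext p
      simp [Matrix.mulVec, dotProduct]
    rw [heq]
    refine Finset.measurable_sum _ fun j _ => ?_
    exact ((hker i j).comp measurable_snd).mul
      ((measurable_pi_apply j).comp (hu.comp (hθ.comp (measurable_snd.prodMk measurable_fst))))
  -- integrability of the integrand in s, for bounded measurable u
  have hInt : ∀ u : Ω → (Fin d → ℝ), Measurable u → ∀ C : ℝ, (∀ ω, ‖u ω‖ ≤ C) →
      ∀ ω : Ω, IntegrableOn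
        (fun s : ℝ => (NormedSpace.exp ((-s) • A)).mulVec (u (θ s ω))) (Set.Iic 0) := by
    intro u hu C hC ω
    have hC0 : 0 ≤ C := le_trans (norm_nonneg _) (hC ω)
    have hmeass : Measurable fun s : ℝ =>
        (NormedSpace.exp ((-s) • A)).mulVec (u (θ s ω)) := by
      have h2 : (fun s : ℝ => (NormedSpace.exp ((-s) • A)).mulVec (u (θ s ω)))
          = ((fun p : Ω × ℝ => (NormedSpace.exp ((-p.2) • A)).mulVec (u (θ p.2 p.1)))
            ∘ (fun s : ℝ => (ω, s))) := rfl
      rw [h2]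
      exact (hintegrand u hu).comp measurable_prodMk_left
    refine (((SmallGainAux.integrableOn_exp_mul_Iic hb).const_mul ((d : ℝ) * C)).mono'
      hmeass.aestronglyMeasurable ?_)
    filter_upwards [ae_restrict_mem measurableSet_Iic] with s hs
    have hkb := kernel_bound A l hA (Set.mem_Iic.1 hs) (u (θ s ω))
    have hexp : l * (-s) = b * s := by rw [hbdef]; ring
    calc ‖(NormedSpace.exp ((-s) • A)).mulVec (u (θ s ω))‖
        ≤ (d : ℝ) * Real.exp (l * (-s)) * ‖u (θ s ω)‖ := hkb
      _ ≤ (d : ℝ) * Real.exp (b * s) * C := by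
          rw [hexp]
          gcongr
          exact hC _
      _ = (d : ℝ) * C * Real.exp (b * s) := by ring
  -- measurability of the integral in ω
  have hKmeas : ∀ u : Ω → (Fin d → ℝ), Measurable u →
      Measurable fun ω : Ω => ∫ s in Set.Iic (0 : ℝ),
        (NormedSpace.exp ((-s) • A)).mulVec (u (θ s ω)) :=
    fun u hu =>
      (MeasureTheory.StronglyMeasurable.integral_prod_right'
        ((hintegrand u hu).stronglyMeasurable)).measurable
  -- the complete space of bounded measurable functions
  set S : Set (Ω →ᵇ (Fin d → ℝ)) := {u | Measurable ⇑u} with hSdef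
  have hSclosed : IsClosed S := by
    refine IsSeqClosed.isClosed ?_
    intro x p hx hxp
    refine measurable_of_tendsto_metrizable (fun n => hx n) ?_
    rw [tendsto_pi_nhds]
    intro ω
    exact (BoundedContinuousFunction.lipschitz_eval_const ω).continuous.continuousAt.tendsto.comp hxp
  haveI : CompleteSpace S := hSclosed.completeSpace_coe
  haveI : Nonempty S := ⟨⟨0, by
    have h0 : ⇑(0 : Ω →ᵇ (Fin d → ℝ)) = fun _ : Ω => (0 : Fin d → ℝ) := rfl
    show Measurable ⇑(0 : Ω →ᵇ (Fin d → ℝ))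
    rw [h0]
    exact measurable_const⟩⟩
  -- the gain operator on S
  have hTmeas : ∀ u : Ω → (Fin d → ℝ), Measurable u →
      Measurable fun ω : Ω => h ((∫ s in Set.Iic (0 : ℝ),
        (NormedSpace.exp ((-s) • A)).mulVec (u (θ s ω))) + c ω) :=
    fun u hu => hC1.continuous.measurable.comp ((hKmeas u hu).add hc)
  let TB : S → S := fun u =>
    ⟨BoundedContinuousFunction.ofNormedAddCommGroup
      (fun ω : Ω => h ((∫ s in Set.Iic (0 : ℝ),
        (NormedSpace.exp ((-s) • A)).mulVec ((u : Ω →ᵇ (Fin d → ℝ)) (θ s ω))) + c ω))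
      continuous_of_discreteTopology M (fun ω => hhM _),
      hTmeas _ u.2⟩
  -- the contraction estimate
  set k : ℝ := L * (d : ℝ) ^ 2 / b with hkdef
  have hk0 : 0 ≤ k := by positivity
  have hk1 : k < 1 := by
    rw [hkdef, div_lt_one hb]
    exact hsmall
  have key : ∀ u v : S, dist (TB u) (TB v) ≤ k * dist u v := by
    intro u v
    rw [Subtype.dist_eq, Subtype.dist_eq]
    have hkd : 0 ≤ k * dist u.1 v.1 := mul_nonneg hk0 dist_nonneg
    refine (BoundedContinuousFunction.dist_le hkd).2 fun ω => ?_
    have hIu := hInt _ u.2 ‖u.1‖ u.1.norm_coe_le_norm ω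
    have hIv := hInt _ v.2 ‖v.1‖ v.1.norm_coe_le_norm ω
    have hsub : ((∫ s in Set.Iic (0 : ℝ),
          (NormedSpace.exp ((-s) • A)).mulVec (u.1 (θ s ω))) + c ω)
        - ((∫ s in Set.Iic (0 : ℝ),
          (NormedSpace.exp ((-s) • A)).mulVec (v.1 (θ s ω))) + c ω)
        = ∫ s in Set.Iic (0 : ℝ),
          (NormedSpace.exp ((-s) • A)).mulVec (u.1 (θ s ω) - v.1 (θ s ω)) := by
      rw [add_sub_add_right_eq_sub, ← integral_sub hIu hIv]
      congr 1
      funext s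
      rw [Matrix.mulVec_sub]
    have hnormint : ‖∫ s in Set.Iic (0 : ℝ),
        (NormedSpace.exp ((-s) • A)).mulVec (u.1 (θ s ω) - v.1 (θ s ω))‖
        ≤ (d : ℝ) * dist u.1 v.1 * b⁻¹ := by
      have hbound : ∀ᵐ s ∂(volume.restrict (Set.Iic (0:ℝ))),
          ‖(NormedSpace.exp ((-s) • A)).mulVec (u.1 (θ s ω) - v.1 (θ s ω))‖
          ≤ ((d : ℝ) * dist u.1 v.1) * Real.exp (b * s) := by
        filter_upwards [ae_restrict_mem measurableSet_Iic] with s hs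
        have hkb := kernel_bound A l hA (Set.mem_Iic.1 hs) (u.1 (θ s ω) - v.1 (θ s ω))
        have hexp : l * (-s) = b * s := by rw [hbdef]; ring
        have hdle : ‖u.1 (θ s ω) - v.1 (θ s ω)‖ ≤ dist u.1 v.1 := by
          rw [← dist_eq_norm]
          exact BoundedContinuousFunction.dist_coe_le_dist _
        calc ‖(NormedSpace.exp ((-s) • A)).mulVec (u.1 (θ s ω) - v.1 (θ s ω))‖
            ≤ (d : ℝ) * Real.exp (l * (-s)) * ‖u.1 (θ s ω) - v.1 (θ s ω)‖ := hkb
          _ ≤ (d : ℝ) * Real.exp (b * s) * dist u.1 v.1 := by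
              rw [hexp]; gcongr
          _ = ((d : ℝ) * dist u.1 v.1) * Real.exp (b * s) := by ring
      have hgint : Integrable (fun s : ℝ => ((d : ℝ) * dist u.1 v.1) * Real.exp (b * s))
          (volume.restrict (Set.Iic (0:ℝ))) :=
        (SmallGainAux.integrableOn_exp_mul_Iic hb).const_mul _
      have := norm_integral_le_of_norm_le hgint hbound
      calc ‖∫ s in Set.Iic (0 : ℝ),
          (NormedSpace.exp ((-s) • A)).mulVec (u.1 (θ s ω) - v.1 (θ s ω))‖
          ≤ ∫ s in Set.Iic (0 : ℝ), ((d : ℝ) * dist u.1 v.1) * Real.exp (b * s) := this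
        _ = ((d : ℝ) * dist u.1 v.1) * ∫ s in Set.Iic (0 : ℝ), Real.exp (b * s) :=
            integral_const_mul _ _
        _ = (d : ℝ) * dist u.1 v.1 * b⁻¹ := by rw [SmallGainAux.integral_exp_mul_Iic hb]
    calc dist ((TB u).1 ω) ((TB v).1 ω)
        = ‖h ((∫ s in Set.Iic (0 : ℝ),
            (NormedSpace.exp ((-s) • A)).mulVec (u.1 (θ s ω))) + c ω)
          - h ((∫ s in Set.Iic (0 : ℝ),
            (NormedSpace.exp ((-s) • A)).mulVec (v.1 (θ s ω))) + c ω)‖ := dist_eq_norm _ _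
      _ ≤ L * d * ‖((∫ s in Set.Iic (0 : ℝ),
            (NormedSpace.exp ((-s) • A)).mulVec (u.1 (θ s ω))) + c ω)
          - ((∫ s in Set.Iic (0 : ℝ),
            (NormedSpace.exp ((-s) • A)).mulVec (v.1 (θ s ω))) + c ω)‖ :=
          lip_h hL h hC1 hD _ _
      _ = L * d * ‖∫ s in Set.Iic (0 : ℝ),
            (NormedSpace.exp ((-s) • A)).mulVec (u.1 (θ s ω) - v.1 (θ s ω))‖ := by
          rw [hsub]
      _ ≤ L * d * ((d : ℝ) * dist u.1 v.1 * b⁻¹) := by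
          gcongr
      _ = k * dist u.1 v.1 := by rw [hkdef]; ring
  have hcontr : ContractingWith (Real.toNNReal k) TB := by
    constructor
    · rw [← NNReal.coe_lt_coe, Real.coe_toNNReal _ hk0, NNReal.coe_one]
      exact hk1
    · refine LipschitzWith.of_dist_le_mul fun u v => ?_
      rw [Real.coe_toNNReal _ hk0]
      exact key u v
  -- the fixed point
  set uS : S := ContractingWith.fixedPoint TB hcontr with huSdef
  have hufix : TB uS = uS := hcontr.fixedPoint_isFixedPt
  have hptfix : ∀ ω : Ω, (uS.1 : Ω → Fin d → ℝ) ω = h ((∫ s in Set.Iic (0 : ℝ),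
      (NormedSpace.exp ((-s) • A)).mulVec (uS.1 (θ s ω))) + c ω) := by
    intro ω
    have := congrFun (congrArg (fun w : S => ⇑w.1) hufix) ω
    exact this.symm
  refine ⟨⇑uS.1, ⟨uS.2, fun ω => by rw [hptfix ω]; exact hrange _, hptfix⟩, ?_⟩
  · rintro v ⟨hvm, hvb, hvfix⟩
    have hvM : ∀ ω, ‖v ω‖ ≤ M := fun ω => hnormN _ (hvb ω).1 (hvb ω).2
    let vS : S := ⟨BoundedContinuousFunction.ofNormedAddCommGroup v
      continuous_of_discreteTopology M hvM, hvm⟩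
    have hvfix' : Function.IsFixedPt TB vS := by
      refine Subtype.ext (BoundedContinuousFunction.ext fun ω => ?_)
      exact (hvfix ω).symm
    have := hcontr.fixedPoint_unique hvfix'
    have hv : vS = uS := this
    exact congrArg (fun w : S => ⇑w.1) hv
end

section
/- Let A = [[−1, 1, 0], [1, −2, 0], [0, 1, −1]]. Then for every t ≥ 0 and all indices i, j ∈ {1,2,3}, the entries of the matrix exponential satisfy |exp(tA)_{ij}| ≤ e^{((−3+√5)/2)·t}. -/
open Matrix

set_option maxHeartbeats 1600000 in
/-- Estimate `‖Φ(t)‖ = max_{i,j}|Φ_{ij}(t)| ≤ e^{λ₂ t}`, `λ₂ = (−3+√5)/2`, of the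
paper's Example 5.1, verifying hypothesis (A) for the stochastic cooperative system. -/
theorem example51_exp_entry_bound :
    let A : Matrix (Fin 3) (Fin 3) ℝ := !![-1, 1, 0; 1, -2, 0; 0, 1, -1]
    ∀ t : ℝ, 0 ≤ t → ∀ i j : Fin 3,
      |NormedSpace.exp (t • A) i j| ≤ Real.exp ((-3 + Real.sqrt 5) / 2 * t) := by
  intro A t ht i j
  set s := Real.sqrt 5 with hs_def
  have hs2 : s ^ 2 = 5 := Real.sq_sqrt (by norm_num)
  have hs0 : 0 ≤ s := Real.sqrt_nonneg 5
  have hs_lb : 2 < s := by nlinarith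
  have hs_ub : s < 3 := by nlinarith
  have h5pos : (0:ℝ) < 5 - s := by nlinarith
  have h5s : (5 : ℝ) - s ≠ 0 := ne_of_gt h5pos
  set P : Matrix (Fin 3) (Fin 3) ℝ :=
    !![1, (s-1)/2, 0; (s-1)/2, -1, 0; 1, (s-1)/2, 1] with hP
  set Q : Matrix (Fin 3) (Fin 3) ℝ :=
    !![2/(5-s), (s-1)/(5-s), 0; (s-1)/(5-s), -2/(5-s), 0; -1, 0, 1] with hQ
  have hPQ : P * Q = 1 := by
    rw [hP, hQ, Matrix.mul_fin_three]
    ext i j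
    fin_cases i <;> fin_cases j <;>
      simp [Matrix.one_apply] <;> field_simp <;> nlinarith
  have hQinv : P⁻¹ = Q := Matrix.inv_eq_right_inv hPQ
  have hPunit : IsUnit P := (Matrix.isUnit_iff_isUnit_det P).mpr (Matrix.isUnit_det_of_right_inverse hPQ)
  have hPP : P * P⁻¹ = 1 := by rw [hQinv]; exact hPQ
  set d : Fin 3 → ℝ := ![(-3+s)/2 * t, (-3-s)/2 * t, -t] with hd
  have hdiag : Matrix.diagonal d = !![(-3+s)/2 * t, 0, 0; 0, (-3-s)/2 * t, 0; 0, 0, -t] := by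
    ext i j
    fin_cases i <;> fin_cases j <;>
      simp [Matrix.diagonal_apply, hd, Matrix.vecHead, Matrix.vecTail]
  have htA : t • A = !![-t, t, 0; t, -(2*t), 0; 0, t, -t] := by
    ext i j
    fin_cases i <;> fin_cases j <;> simp [A, Matrix.smul_apply] <;> ring
  have key : (t • A) * P = P * Matrix.diagonal d := by
    rw [htA, hdiag, hP, Matrix.mul_fin_three, Matrix.mul_fin_three]
    ext i j
    fin_cases i <;> fin_cases j <;> simp <;> ring_nf <;>
      nlinarith [hs2, ht, sq_nonneg t]
  have hA : t • A = P * Matrix.diagonal d * P⁻¹ := by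
    calc t • A = (t • A) * (P * P⁻¹) := by rw [hPP, mul_one]
    _ = ((t • A) * P) * P⁻¹ := by rw [mul_assoc]
    _ = P * Matrix.diagonal d * P⁻¹ := by rw [key]
  set E1 := Real.exp ((-3 + s) / 2 * t) with hE1
  set E2 := Real.exp ((-3 - s) / 2 * t) with hE2
  set E3 := Real.exp (-t) with hE3
  have hE1pos : 0 < E1 := Real.exp_pos _
  have hE2pos : 0 < E2 := Real.exp_pos _
  have hE3pos : 0 < E3 := Real.exp_pos _
  have h21 : E2 ≤ E1 := Real.exp_le_exp.mpr (by nlinarith)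
  have h31 : E3 ≤ E1 := Real.exp_le_exp.mpr (by nlinarith)
  have hD : NormedSpace.exp (Matrix.diagonal d) = !![E1, 0, 0; 0, E2, 0; 0, 0, E3] := by
    rw [Matrix.exp_diagonal]
    ext i j
    fin_cases i <;> fin_cases j <;>
      simp [Matrix.diagonal_apply, hd, hE1, hE2, hE3, ← Real.exp_eq_exp_ℝ,
        Matrix.vecHead, Matrix.vecTail]
  have hexp : NormedSpace.exp (t • A)
      = P * !![E1, 0, 0; 0, E2, 0; 0, 0, E3] * Q := by
    rw [hA, Matrix.exp_conj P (Matrix.diagonal d) hPunit, hD, hQinv]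
  have hR : P * !![E1, 0, 0; 0, E2, 0; 0, 0, E3] * Q =
      !![ (2*E1+(3-s)*E2)/(5-s), (s-1)*(E1-E2)/(5-s), 0;
          (s-1)*(E1-E2)/(5-s), ((3-s)*E1+2*E2)/(5-s), 0;
          (2*E1+(3-s)*E2-(5-s)*E3)/(5-s), (s-1)*(E1-E2)/(5-s), E3 ] := by
    rw [hP, hQ, Matrix.mul_fin_three, Matrix.mul_fin_three]
    ext i j
    have hs3 : s ^ 3 = 5 * s := by rw [pow_succ, hs2]
    have hs4 : s ^ 4 = 25 := by nlinarith [hs2]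
    fin_cases i <;> fin_cases j <;> simp <;> field_simp <;> ring_nf <;>
      nlinarith [hs2, hs3, hs4, hE1pos.le, hE2pos.le, hE3pos.le]
  rw [hexp, hR]
  rw [hE1]
  fin_cases i <;> fin_cases j <;>
    (simp only []; rw [← hE1]; rw [abs_le]; constructor) <;>
    simp <;>
    first
    | positivity
    | (rw [div_le_iff₀ h5pos]; nlinarith)
    | (rw [le_div_iff₀ h5pos]; nlinarith)
    | nlinarith
end

section
/- For every t ≥ 0: 2^{1/3}·e^{−(1+√2)t} + (2^{5/6} − 2^{1/3})/2 − ((2^{5/6} + 2^{1/3})/2)·e^{−2√2·t} < 1. -/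
private lemma cube_23 : ((2:ℝ) ^ ((1:ℝ)/3)) ^ (3:ℕ) = 2 := by
  rw [← Real.rpow_natCast ((2:ℝ) ^ ((1:ℝ)/3)) 3, ← Real.rpow_mul (by norm_num)]
  norm_num

private lemma pow6_32 : ((2:ℝ) ^ ((5:ℝ)/6)) ^ (6:ℕ) = 32 := by
  rw [← Real.rpow_natCast ((2:ℝ) ^ ((5:ℝ)/6)) 6, ← Real.rpow_mul (by norm_num)]
  norm_num

private lemma a_bounds : (1.25:ℝ) ≤ (2:ℝ) ^ ((1:ℝ)/3) ∧ (2:ℝ) ^ ((1:ℝ)/3) ≤ 1.26 := by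
  have hpos : (0:ℝ) < (2:ℝ) ^ ((1:ℝ)/3) := Real.rpow_pos_of_pos (by norm_num) _
  have h := cube_23
  constructor
  · by_contra hlt
    push_neg at hlt
    have : ((2:ℝ) ^ ((1:ℝ)/3)) ^ (3:ℕ) ≤ (1.25:ℝ) ^ (3:ℕ) :=
      pow_le_pow_left₀ hpos.le hlt.le 3
    rw [h] at this; norm_num at this
  · by_contra hlt
    push_neg at hlt
    have : (1.26:ℝ) ^ (3:ℕ) ≤ ((2:ℝ) ^ ((1:ℝ)/3)) ^ (3:ℕ) :=
      pow_le_pow_left₀ (by norm_num) hlt.le 3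
    rw [h] at this; norm_num at this

private lemma b_bounds : (1.78:ℝ) ≤ (2:ℝ) ^ ((5:ℝ)/6) ∧ (2:ℝ) ^ ((5:ℝ)/6) ≤ 1.79 := by
  have hpos : (0:ℝ) < (2:ℝ) ^ ((5:ℝ)/6) := Real.rpow_pos_of_pos (by norm_num) _
  have h := pow6_32
  constructor
  · by_contra hlt
    push_neg at hlt
    have : ((2:ℝ) ^ ((5:ℝ)/6)) ^ (6:ℕ) ≤ (1.78:ℝ) ^ (6:ℕ) :=
      pow_le_pow_left₀ hpos.le hlt.le 6
    rw [h] at this; norm_num at this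
  · by_contra hlt
    push_neg at hlt
    have : (1.79:ℝ) ^ (6:ℕ) ≤ ((2:ℝ) ^ ((5:ℝ)/6)) ^ (6:ℕ) :=
      pow_le_pow_left₀ (by norm_num) hlt.le 6
    rw [h] at this; norm_num at this

private lemma sqrt2_bounds : (1.414:ℝ) ≤ Real.sqrt 2 ∧ Real.sqrt 2 ≤ 1.415 := by
  have h : Real.sqrt 2 ^ 2 = 2 := Real.sq_sqrt (by norm_num)
  have hpos : (0:ℝ) ≤ Real.sqrt 2 := Real.sqrt_nonneg 2
  constructor <;> nlinarith

private lemma exp_06 : (1.749:ℝ) ≤ Real.exp 0.6 := by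
  have h4 : Real.exp 0.6 = Real.exp 0.15 ^ (4:ℕ) := by
    rw [← Real.exp_nat_mul]; norm_num
  have h15 : (1.15:ℝ) ≤ Real.exp 0.15 := by
    have := Real.add_one_le_exp (0.15:ℝ); linarith
  rw [h4]
  calc (1.749:ℝ) ≤ 1.15 ^ (4:ℕ) := by norm_num
    _ ≤ Real.exp 0.15 ^ (4:ℕ) := pow_le_pow_left₀ (by norm_num) h15 4

private lemma exp_neg_07075 : (0.459:ℝ) ≤ Real.exp (-0.7075) := by
  have h4 : Real.exp (-0.7075) = Real.exp (-0.176875) ^ (4:ℕ) := by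
    rw [← Real.exp_nat_mul]; norm_num
  have h1 : (0.823125:ℝ) ≤ Real.exp (-0.176875) := by
    have := Real.add_one_le_exp (-0.176875:ℝ); linarith
  rw [h4]
  calc (0.459:ℝ) ≤ (0.823125:ℝ) ^ (4:ℕ) := by norm_num
    _ ≤ Real.exp (-0.176875) ^ (4:ℕ) := pow_le_pow_left₀ (by norm_num) h1 4

/-- The bound `Ψ₃₁(t) < 1` from the paper's Example 5.3. -/
theorem example53_Psi31_lt_one :
    ∀ t : ℝ, 0 ≤ t →
      (2 : ℝ) ^ ((1 : ℝ) / 3) * Real.exp (-(1 + Real.sqrt 2) * t)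
        + ((2 : ℝ) ^ ((5 : ℝ) / 6) - (2 : ℝ) ^ ((1 : ℝ) / 3)) / 2
        - ((2 : ℝ) ^ ((5 : ℝ) / 6) + (2 : ℝ) ^ ((1 : ℝ) / 3)) / 2
            * Real.exp (-2 * Real.sqrt 2 * t) < 1 := by
  intro t ht
  obtain ⟨ha1, ha2⟩ := a_bounds
  obtain ⟨hb1, hb2⟩ := b_bounds
  obtain ⟨hs1, hs2⟩ := sqrt2_bounds
  set a := (2:ℝ) ^ ((1:ℝ)/3)
  set b := (2:ℝ) ^ ((5:ℝ)/6)
  have hE1pos : (0:ℝ) < Real.exp (-(1 + Real.sqrt 2) * t) := Real.exp_pos _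
  have hE2pos : (0:ℝ) < Real.exp (-2 * Real.sqrt 2 * t) := Real.exp_pos _
  rcases le_or_gt t (1/4) with hc | hc
  · -- small t
    have hE1 : Real.exp (-(1 + Real.sqrt 2) * t) ≤ 1 := by
      calc Real.exp (-(1 + Real.sqrt 2) * t) ≤ Real.exp 0 :=
            Real.exp_le_exp.mpr (by nlinarith)
        _ = 1 := Real.exp_zero
    have hE2 : (0.459:ℝ) ≤ Real.exp (-2 * Real.sqrt 2 * t) :=
      le_trans exp_neg_07075 (Real.exp_le_exp.mpr (by nlinarith))
    nlinarith [mul_le_mul ha2 hE1 hE1pos.le (by norm_num : (0:ℝ) ≤ 1.26),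
      mul_le_mul (by linarith : (1.515:ℝ) ≤ (b + a)/2) hE2 (by norm_num) (by linarith)]
  · -- large t
    have hE1 : Real.exp (-(1 + Real.sqrt 2) * t) ≤ (1.749:ℝ)⁻¹ := by
      calc Real.exp (-(1 + Real.sqrt 2) * t) ≤ Real.exp (-0.6) :=
            Real.exp_le_exp.mpr (by nlinarith)
        _ = (Real.exp 0.6)⁻¹ := Real.exp_neg 0.6
        _ ≤ (1.749:ℝ)⁻¹ := inv_anti₀ (by norm_num) exp_06
    have hba : (0:ℝ) < (b + a)/2 := by linarith
    nlinarith [mul_le_mul ha2 hE1 hE1pos.le (by norm_num : (0:ℝ) ≤ 1.26),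
      mul_pos hba hE2pos]
end

section
/- For every t ≥ 0: −2·e^{−(1+√2)t} + (3/2 − √2) + (3/2 + √2)·e^{−2√2·t} ≤ 1. -/
/-- The bound `Ψ₃₃(t) ≤ 1` from the paper's Example 5.3. -/
theorem example53_Psi33_le_one :
    ∀ t : ℝ, 0 ≤ t →
      -2 * Real.exp (-(1 + Real.sqrt 2) * t) + (3 / 2 - Real.sqrt 2)
        + (3 / 2 + Real.sqrt 2) * Real.exp (-2 * Real.sqrt 2 * t) ≤ 1 := by
  intro t ht
  set s := Real.sqrt 2 with hs
  have hs1 : (1:ℝ) ≤ s := by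
    rw [hs]; nlinarith [Real.sq_sqrt (by norm_num : (2:ℝ) ≥ 0), Real.sqrt_nonneg 2]
  have h1 : Real.exp (-2 * s * t) ≤ Real.exp (-(1 + s) * t) := by
    apply Real.exp_le_exp.mpr; nlinarith
  have h2 : Real.exp (-2 * s * t) ≤ 1 := by
    apply Real.exp_le_one_iff.mpr; nlinarith [Real.sqrt_nonneg 2]
  have h3 : 0 < Real.exp (-2 * s * t) := Real.exp_pos _
  nlinarith
end

section
/- Let A be a real d×d matrix and λ, ε, L real numbers with λ − ε − L > 0 and ⟨x, Ax⟩ ≤ −(λ − ε)‖x‖₂² for all x ∈ ℝ^d. Let h : ℝ^d → ℝ^d be globally Lipschitz with constant L in the Euclidean norm, and let σ₁, …, σ_d ∈ ℝ. Then there exists R > 0 such that for every x ∈ ℝ^d with ‖x‖₂ ≥ R: (1/2)∑_{i=1}^d σ_i² + ⟨x, Ax + h(x)⟩ ≤ −(1/2)(λ − ε − L)‖x‖₂². -/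
open scoped RealInnerProductSpace

/-- Inequality (NEG) of Section 6 of the paper: under `λ − ε − L > 0`, there is `R > 0`
such that `LV(x) = (1/2)∑σᵢ² + ⟨x, Ax + h(x)⟩ ≤ −(1/2)(λ−ε−L)‖x‖₂²` for `‖x‖₂ ≥ R`. -/
theorem fokker_planck_negative_drift
    {d : ℕ} (A : Matrix (Fin d) (Fin d) ℝ) (l ε L : ℝ)
    (hpos : 0 < l - ε - L)
    (hA : ∀ x : EuclideanSpace ℝ (Fin d),
      ⟪x, ((WithLp.equiv 2 (Fin d → ℝ)).symm (A.mulVec x) : EuclideanSpace ℝ (Fin d))⟫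
        ≤ -(l - ε) * ‖x‖ ^ 2)
    (h : EuclideanSpace ℝ (Fin d) → EuclideanSpace ℝ (Fin d))
    (hLip : ∀ x y : EuclideanSpace ℝ (Fin d), ‖h x - h y‖ ≤ L * ‖x - y‖)
    (σ : Fin d → ℝ) :
    ∃ R : ℝ, 0 < R ∧ ∀ x : EuclideanSpace ℝ (Fin d), R ≤ ‖x‖ →
      (1 / 2) * ∑ i : Fin d, σ i ^ 2 +
        ⟪x, ((WithLp.equiv 2 (Fin d → ℝ)).symm (A.mulVec x) : EuclideanSpace ℝ (Fin d))
          + h x⟫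
      ≤ -(1 / 2) * (l - ε - L) * ‖x‖ ^ 2 := by
  set c := l - ε - L with hc
  set S := (1 / 2) * ∑ i : Fin d, σ i ^ 2 with hS
  have hSnn : 0 ≤ S := by
    apply mul_nonneg (by norm_num)
    exact Finset.sum_nonneg fun i _ => sq_nonneg _
  set C := ‖h 0‖ with hC
  have hCnn : 0 ≤ C := norm_nonneg _
  clear_value c S
  refine ⟨max 1 ((2 / c) * (S + C)), lt_of_lt_of_le one_pos (le_max_left _ _), ?_⟩
  intro x hx
  have hr1 : 1 ≤ ‖x‖ := le_trans (le_max_left _ _) hx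
  have hr2 : (2 / c) * (S + C) ≤ ‖x‖ := le_trans (le_max_right _ _) hx
  have hrc : 2 * (S + C) ≤ c * ‖x‖ := by
    have h' := mul_le_mul_of_nonneg_left hr2 hpos.le
    have h'' : c * (2 / c * (S + C)) = 2 * (S + C) := by field_simp
    linarith [h', h'']
  have hhx : ‖h x‖ ≤ L * ‖x‖ + C := by
    have h1 := hLip x 0
    simp only [sub_zero] at h1
    calc ‖h x‖ ≤ ‖h x - h 0‖ + ‖h 0‖ := by
          have := norm_sub_norm_le (h x) (h 0); linarith [norm_sub_norm_le (h x) (h 0),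
            norm_add_le (h x - h 0) (h 0)]
      _ ≤ L * ‖x‖ + C := by rw [hC]; linarith [h1]
  have hinner : ⟪x, h x⟫ ≤ ‖x‖ * (L * ‖x‖ + C) := by
    calc ⟪x, h x⟫ ≤ ‖x‖ * ‖h x‖ := real_inner_le_norm x (h x)
      _ ≤ ‖x‖ * (L * ‖x‖ + C) := by
          apply mul_le_mul_of_nonneg_left hhx (norm_nonneg x)
  rw [inner_add_right]
  have hAx := hA x
  have key : S + C * ‖x‖ ≤ (1 / 2) * c * ‖x‖ ^ 2 := by
    nlinarith [sq_nonneg (‖x‖ - 1), hSnn, hCnn, hpos, hr1, hrc]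
  nlinarith [hAx, hinner, key]
end
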